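/- Let f : {0,1}^k → {0,1}^k, let 𝒮 = (S_1, …, S_k) be size-s subsets of [k], and suppose val(𝒢_𝒮) < 1. Then val(𝒢_𝒮^{⊗n}) ≤ (1 − 2^{−k})^n for all n; in particular, val(𝒢_𝒮^{⊗n}) decays exponentially in n. -/

import Mathlib

/-- `f^{⊗n}` applies `f` in place to each row `(x_{i1}, …, x_{ik})`, `i ∈ [n]`. -/
def tensor (n : ℕ) {k : ℕ} (f : (Fin k → Bool) → Fin k → Bool) :
    (Fin k → Fin n → Bool) → Fin k → Fin n → Bool :=
  fun x j i => f (fun j' => x j' i) j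

/-- Value of the game `𝒢_𝒮`. -/
noncomputable def gameVal (k : ℕ) (f : (Fin k → Bool) → Fin k → Bool)
    (S : Fin k → Finset (Fin k)) : ℝ :=
  sSup {p : ℝ | ∃ g : Fin k → (Fin k → Bool) → Bool,
    (∀ j x y, (∀ j' ∈ S j, x j' = y j') → g j x = g j y) ∧
    p = (Nat.card {x : Fin k → Bool // f x = fun j => g j x} : ℝ) / 2 ^ k}

/-- Value of the `n`-fold repeated game `𝒢_𝒮^{⊗n}`. -/
noncomputable def gameValN (n k : ℕ) (f : (Fin k → Bool) → Fin k → Bool)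
    (S : Fin k → Finset (Fin k)) : ℝ :=
  sSup {p : ℝ | ∃ g : Fin k → (Fin k → Fin n → Bool) → Fin n → Bool,
    (∀ j x y, (∀ j' ∈ S j, x j' = y j') → g j x = g j y) ∧
    p = (Nat.card {x : Fin k → Fin n → Bool // tensor n f x = fun j => g j x} : ℝ)
          / 2 ^ (n * k)}

/-- If `val < 1`, some player cannot determine its answer from its view. -/
lemma exists_bad (k : ℕ) (f : (Fin k → Bool) → Fin k → Bool)
    (S : Fin k → Finset (Fin k)) (hval : gameVal k f S < 1) :
    ∃ j₀ u v, (∀ j' ∈ S j₀, u j' = v j') ∧ f u j₀ ≠ f v j₀ := by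
  by_contra h
  push_neg at h
  have hdet : ∀ j (u v : Fin k → Bool), (∀ j' ∈ S j, u j' = v j') → f u j = f v j := h
  have h1 : (1 : ℝ) ∈ {p : ℝ | ∃ g : Fin k → (Fin k → Bool) → Bool,
      (∀ j x y, (∀ j' ∈ S j, x j' = y j') → g j x = g j y) ∧
      p = (Nat.card {x : Fin k → Bool // f x = fun j => g j x} : ℝ) / 2 ^ k} := by
    refine ⟨fun j x => f x j, fun j x y hxy => hdet j x y hxy, ?_⟩
    have : {x : Fin k → Bool // f x = fun j => f x j} ≃ (Fin k → Bool) :=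
      Equiv.subtypeUnivEquiv (fun x => rfl)
    rw [Nat.card_congr this]
    simp [Nat.card_eq_fintype_card]
  have hbdd : BddAbove {p : ℝ | ∃ g : Fin k → (Fin k → Bool) → Bool,
      (∀ j x y, (∀ j' ∈ S j, x j' = y j') → g j x = g j y) ∧
      p = (Nat.card {x : Fin k → Bool // f x = fun j => g j x} : ℝ) / 2 ^ k} := by
    refine ⟨1, fun p hp => ?_⟩
    obtain ⟨g, _, rfl⟩ := hp
    rw [div_le_one (by positivity)]
    have : Nat.card {x : Fin k → Bool // f x = fun j => g j x} ≤ Nat.card (Fin k → Bool) :=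
      Nat.card_le_card_of_injective _ Subtype.val_injective
    calc (Nat.card {x : Fin k → Bool // f x = fun j => g j x} : ℝ)
        ≤ (Nat.card (Fin k → Bool) : ℝ) := by exact_mod_cast this
      _ = 2 ^ k := by simp [Nat.card_eq_fintype_card]
  have := le_csSup hbdd h1
  rw [gameVal] at hval
  linarith

lemma count_bound {n k : ℕ} (f : (Fin k → Bool) → Fin k → Bool)
    (S : Fin k → Finset (Fin k)) (j₀ : Fin k) (u v : Fin k → Bool)
    (huv : ∀ j' ∈ S j₀, u j' = v j') (hf : f u j₀ ≠ f v j₀)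
    (g : Fin k → (Fin k → Fin n → Bool) → Fin n → Bool)
    (hg : ∀ j x y, (∀ j' ∈ S j, x j' = y j') → g j x = g j y) :
    Nat.card {x : Fin k → Fin n → Bool // tensor n f x = fun j => g j x}
      ≤ (2 ^ k - 1) ^ n := by
  have huvne : u ≠ v := fun h => hf (by rw [h])
  set ψ : (Fin k → Bool) → (Fin k → Bool) := fun c => if c = v then u else c with hψ
  have hψne : ∀ c, ψ c ≠ v := by
    intro c
    by_cases hc : c = v <;> simp [hψ, hc, huvne]
  have hψcases : ∀ a b, ψ a = ψ b → a = b ∨ (a = u ∧ b = v) ∨ (a = v ∧ b = u) := by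
    intro a b hab
    by_cases ha : a = v <;> by_cases hb : b = v <;> simp [hψ, ha, hb] at hab ⊢ <;> tauto
  have hψS : ∀ a b, ψ a = ψ b → ∀ j' ∈ S j₀, a j' = b j' := by
    intro a b hab j' hj'
    rcases hψcases a b hab with h | ⟨h1, h2⟩ | ⟨h1, h2⟩
    · rw [h]
    · rw [h1, h2]; exact huv j' hj'
    · rw [h1, h2]; exact (huv j' hj').symm
  set Φ : {x : Fin k → Fin n → Bool // tensor n f x = fun j => g j x} →
      (Fin n → {c : Fin k → Bool // c ≠ v}) :=
    fun x i => ⟨ψ (fun j' => x.1 j' i), hψne _⟩ with hΦ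
  have hΦinj : Function.Injective Φ := by
    rintro ⟨x, hx⟩ ⟨x', hx'⟩ hxx'
    have hcol : ∀ i, ψ (fun j' => x j' i) = ψ (fun j' => x' j' i) := by
      intro i
      have := congrFun hxx' i
      simpa [hΦ, Subtype.ext_iff] using this
    have hgS : g j₀ x = g j₀ x' := by
      apply hg j₀ x x'
      intro j' hj'
      funext i
      exact hψS _ _ (hcol i) j' hj'
    have hcols : ∀ i, (fun j' => x j' i) = (fun j' => x' j' i) := by
      intro i
      rcases hψcases _ _ (hcol i) with h | ⟨h1, h2⟩ | ⟨h1, h2⟩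
      · exact h
      · exfalso
        have e1 : f (fun j' => x j' i) j₀ = g j₀ x i := congrFun (congrFun hx j₀) i
        have e2 : f (fun j' => x' j' i) j₀ = g j₀ x' i := congrFun (congrFun hx' j₀) i
        rw [h1] at e1; rw [h2] at e2
        exact hf (by rw [e1, e2, hgS])
      · exfalso
        have e1 : f (fun j' => x j' i) j₀ = g j₀ x i := congrFun (congrFun hx j₀) i
        have e2 : f (fun j' => x' j' i) j₀ = g j₀ x' i := congrFun (congrFun hx' j₀) i
        rw [h1] at e1; rw [h2] at e2
        exact hf (by rw [e2, e1, hgS])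
    ext j i
    exact congrFun (hcols i) j
  have := Nat.card_le_card_of_injective Φ hΦinj
  calc Nat.card {x : Fin k → Fin n → Bool // tensor n f x = fun j => g j x}
      ≤ Nat.card (Fin n → {c : Fin k → Bool // c ≠ v}) := this
    _ = (2 ^ k - 1) ^ n := by
        rw [Nat.card_fun]
        simp [Nat.card_eq_fintype_card, Fintype.card_subtype_compl, Fintype.card_subtype_eq]

theorem stmt_12 (k s : ℕ) (f : (Fin k → Bool) → Fin k → Bool)
    (S : Fin k → Finset (Fin k)) (hS : ∀ j, (S j).card = s)
    (hval : gameVal k f S < 1) :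
    ∀ n : ℕ, gameValN n k f S ≤ (1 - (1 / 2 : ℝ) ^ k) ^ n := by
  intro n
  obtain ⟨j₀, u, v, huv, hf⟩ := exists_bad k f S hval
  have hpos : (0 : ℝ) ≤ 1 - (1 / 2 : ℝ) ^ k := by
    have : (1 / 2 : ℝ) ^ k ≤ 1 := pow_le_one₀ (by norm_num) (by norm_num)
    linarith
  apply Real.sSup_le _ (pow_nonneg hpos n)
  rintro p ⟨g, hg, rfl⟩
  have hcard := count_bound f S j₀ u v huv hf g hg
  have h2k : (1 : ℕ) ≤ 2 ^ k := Nat.one_le_two_pow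
  have key : ((2 ^ k - 1 : ℕ) : ℝ) = 2 ^ k - 1 := by
    push_cast [h2k]; ring
  have h1 : (Nat.card {x : Fin k → Fin n → Bool // tensor n f x = fun j => g j x} : ℝ)
      ≤ ((2 : ℝ) ^ k - 1) ^ n := by
    calc (Nat.card {x : Fin k → Fin n → Bool // tensor n f x = fun j => g j x} : ℝ)
        ≤ (((2 ^ k - 1) ^ n : ℕ) : ℝ) := by exact_mod_cast hcard
      _ = ((2 : ℝ) ^ k - 1) ^ n := by push_cast [key]; ring
  rw [div_le_iff₀ (by positivity)]
  calc (Nat.card {x : Fin k → Fin n → Bool // tensor n f x = fun j => g j x} : ℝ)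
      ≤ ((2 : ℝ) ^ k - 1) ^ n := h1
    _ = (1 - (1 / 2 : ℝ) ^ k) ^ n * 2 ^ (n * k) := by
        rw [mul_comm n k, pow_mul, ← mul_pow]
        congr 1
        field_simp
        rw [mul_sub, mul_one, ← mul_pow]; norm_num
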